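/- The 2-transformation S : [0,1] → [0,1] defined by S(x) = {2x, 1−2x} for x ∈ [0,1/2] and S(x) = {2x−1} for x ∈ (1/2,1] preserves Lebesgue measure λ. -/

import Mathlib

open MeasureTheory Set Filter Finset
open scoped ENNReal Classical

noncomputable section

/-- The stochastic kernel of a finite-multivalued transformation `S`:
`K(x,B) = |S(x) ∩ B| / |S(x)|`, valued in `ℝ≥0∞`. -/
def fker {X : Type*} (S : X → Finset X) (x : X) (B : Set X) : ℝ≥0∞ :=
  (((S x).filter (fun y => y ∈ B)).card : ℝ≥0∞) / ((S x).card : ℝ≥0∞)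

/-- The set `S⁻¹_{k;l}(B) = {x : |S(x)| = k, |S(x) ∩ B| = l}`. -/
def preimKL {X : Type*} (S : X → Finset X) (k l : ℕ) (B : Set X) : Set X :=
  {x | (S x).card = k ∧ ((S x).filter (fun y => y ∈ B)).card = l}

/-- The full preimage `S⁻¹(B) = {x : S(x) ∩ B ≠ ∅}`. -/
def fullPre {X : Type*} (S : X → Finset X) (B : Set X) : Set X :=
  {x | ∃ y ∈ S x, y ∈ B}

/-- The Koopman operator `Uf(x) = (1/|S(x)|) ∑_{y ∈ S(x)} f(y)`. -/
def koop {X : Type*} (S : X → Finset X) (f : X → ℝ) (x : X) : ℝ :=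
  (∑ y ∈ S x, f y) / ((S x).card : ℝ)


/-- `S(x) = {2x, 1-2x}` on `[0,1/2]`, `S(x) = {2x-1}` on `(1/2,1]`
preserves Lebesgue measure on `[0,1]`. -/
lemma vol_affine (a b : ℝ) (ha : a ≠ 0) (s : Set ℝ) :
    volume ((fun x => a*x + b)⁻¹' s) = ENNReal.ofReal |a⁻¹| * volume s := by
  have h : (fun x : ℝ => a*x + b) = (fun y => b + y) ∘ (fun x => a * x) := by
    funext x; simp [add_comm]
  rw [h, Set.preimage_comp]
  rw [Real.volume_preimage_mul_left ha, measure_preimage_add]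

lemma lint_ind (s A : Set ℝ) (hA : MeasurableSet A) :
    ∫⁻ x in s, A.indicator 1 x = volume (A ∩ s) := by
  rw [lintegral_indicator hA]
  simp [Measure.restrict_restrict hA, Set.inter_comm]

lemma fker_pt (B : Set ℝ) (x : ℝ) :
    fker (fun x : ℝ => if x ≤ 1/2 then ({2*x, 1 - 2*x} : Finset ℝ) else {2*x - 1}) x B =
    if x ≤ 1/2 then
      (((fun x => 2*x)⁻¹' B).indicator 1 x + ((fun x => 1-2*x)⁻¹' B).indicator 1 x) / 2
    else ((fun x => 2*x-1)⁻¹' B).indicator 1 x := by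
  have e22 : ((2:ℝ≥0∞))/2 = 1 := ENNReal.div_self (by norm_num) (by norm_num)
  by_cases hx : x ≤ 1/2
  · simp only [fker, if_pos hx, Set.indicator_apply, Set.mem_preimage, Pi.one_apply]
    by_cases he : (2*x:ℝ) = 1 - 2*x
    · rw [← he, Finset.pair_eq_singleton, Finset.filter_singleton]
      by_cases h1 : (2*x:ℝ) ∈ B
      · simp only [if_pos h1]
        simpa [one_add_one_eq_two] using e22.symm
      · simp only [if_neg h1]; simp
    · have hc2 : ({2*x, 1-2*x} : Finset ℝ).card = 2 := Finset.card_pair he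
      rw [Finset.filter_insert, Finset.filter_singleton, hc2]
      by_cases h1 : (2*x:ℝ) ∈ B <;> by_cases h2 : (1 - 2*x:ℝ) ∈ B <;>
        simp [h1, h2, Finset.card_insert_of_notMem, Finset.mem_singleton, he,
          one_add_one_eq_two]
  · simp only [fker, if_neg hx, Set.indicator_apply, Set.mem_preimage, Pi.one_apply,
      Finset.filter_singleton]
    by_cases h1 : (2*x - 1:ℝ) ∈ B <;> simp [h1]

theorem ex2_preserving :
    ∀ B : Set ℝ, MeasurableSet B →
      ∫⁻ x, fker (fun x : ℝ =>
          if x ≤ 1/2 then ({2*x, 1 - 2*x} : Finset ℝ) else {2*x - 1}) x B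
          ∂(volume.restrict (Set.Icc (0:ℝ) 1)) =
        (volume.restrict (Set.Icc (0:ℝ) 1)) B := by
  intro B hB
  set c := volume (B ∩ Set.Icc (0:ℝ) 1) with hc
  -- measurable preimages
  have hB1 : MeasurableSet ((fun x : ℝ => 2*x)⁻¹' B) := hB.preimage (by fun_prop)
  have hB2 : MeasurableSet ((fun x : ℝ => 1-2*x)⁻¹' B) := hB.preimage (by fun_prop)
  have hB3 : MeasurableSet ((fun x : ℝ => 2*x-1)⁻¹' B) := hB.preimage (by fun_prop)
  have m1 : Measurable (((fun x : ℝ => 2*x)⁻¹' B).indicator (1 : ℝ → ℝ≥0∞)) :=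
    measurable_one.indicator hB1
  have m2 : Measurable (((fun x : ℝ => 1-2*x)⁻¹' B).indicator (1 : ℝ → ℝ≥0∞)) :=
    measurable_one.indicator hB2
  have half : ENNReal.ofReal |(2:ℝ)⁻¹| = 2⁻¹ := by
    rw [abs_of_pos (by norm_num)]
    rw [ENNReal.ofReal_inv_of_pos (by norm_num)]
    norm_num
  have half' : ENNReal.ofReal |(-2:ℝ)⁻¹| = 2⁻¹ := by
    rw [show |(-2:ℝ)⁻¹| = |(2:ℝ)⁻¹| by norm_num]; exact half
  -- measure of the three pieces
  have v1 : volume ((fun x : ℝ => 2*x)⁻¹' B ∩ Set.Icc 0 (1/2)) = 2⁻¹ * c := by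
    have hset : (fun x : ℝ => 2*x)⁻¹' B ∩ Set.Icc 0 (1/2)
        = (fun x : ℝ => 2*x + 0)⁻¹' (B ∩ Set.Icc 0 1) := by
      ext x
      simp only [Set.mem_inter_iff, Set.mem_preimage, Set.mem_Icc,
        show (2*x + 0 : ℝ) = 2*x by ring]
      constructor
      · rintro ⟨h, h1, h2⟩; exact ⟨h, by linarith, by linarith⟩
      · rintro ⟨h, h1, h2⟩; exact ⟨h, by linarith, by linarith⟩
    rw [hset, vol_affine 2 0 (by norm_num), half]
  have v2 : volume ((fun x : ℝ => 1-2*x)⁻¹' B ∩ Set.Icc 0 (1/2)) = 2⁻¹ * c := by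
    have hset : (fun x : ℝ => 1-2*x)⁻¹' B ∩ Set.Icc 0 (1/2)
        = (fun x : ℝ => (-2)*x + 1)⁻¹' (B ∩ Set.Icc 0 1) := by
      ext x
      simp only [Set.mem_inter_iff, Set.mem_preimage, Set.mem_Icc,
        show ((-2)*x + 1 : ℝ) = 1 - 2*x by ring]
      constructor
      · rintro ⟨h, h1, h2⟩; exact ⟨h, by linarith, by linarith⟩
      · rintro ⟨h, h1, h2⟩; exact ⟨h, by linarith, by linarith⟩
    rw [hset, vol_affine (-2) 1 (by norm_num), half']
  have v3 : volume ((fun x : ℝ => 2*x-1)⁻¹' B ∩ Set.Ioc (1/2) 1) = 2⁻¹ * c := by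
    have hae : ((fun x : ℝ => 2*x-1)⁻¹' B ∩ Set.Ioc (1/2) 1 : Set ℝ)
        =ᵐ[volume] ((fun x : ℝ => 2*x-1)⁻¹' B ∩ Set.Icc (1/2) 1 : Set ℝ) :=
      MeasureTheory.ae_eq_set_inter (ae_eq_refl _) Ioc_ae_eq_Icc
    rw [measure_congr hae]
    have hset : (fun x : ℝ => 2*x-1)⁻¹' B ∩ Set.Icc (1/2) 1
        = (fun x : ℝ => 2*x + (-1))⁻¹' (B ∩ Set.Icc 0 1) := by
      ext x
      simp only [Set.mem_inter_iff, Set.mem_preimage, Set.mem_Icc,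
        show (2*x + (-1) : ℝ) = 2*x - 1 by ring]
      constructor
      · rintro ⟨h, h1, h2⟩; exact ⟨h, by linarith, by linarith⟩
      · rintro ⟨h, h1, h2⟩; exact ⟨h, by linarith, by linarith⟩
    rw [hset, vol_affine 2 (-1) (by norm_num), half]
  -- split the integral
  rw [lintegral_congr (fker_pt B)]
  have hsplit : Set.Icc (0:ℝ) 1 = Set.Icc 0 (1/2) ∪ Set.Ioc (1/2) 1 :=
    (Set.Icc_union_Ioc_eq_Icc (by norm_num) (by norm_num)).symm
  have hdisj : Disjoint (Set.Icc (0:ℝ) (1/2)) (Set.Ioc (1/2) 1) :=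
    Set.disjoint_left.mpr fun x hx hx' => absurd hx.2 (not_le.mpr hx'.1)
  rw [Measure.restrict_apply hB]
  conv_lhs => rw [hsplit]
  rw [lintegral_union measurableSet_Ioc hdisj]
  have hL : (∫⁻ x in Set.Icc (0:ℝ) (1/2),
      if x ≤ 1/2 then
        (((fun x => 2*x)⁻¹' B).indicator 1 x + ((fun x => 1-2*x)⁻¹' B).indicator 1 x) / 2
      else ((fun x => 2*x-1)⁻¹' B).indicator 1 x) = 2⁻¹ * c := by
    rw [setLIntegral_congr_fun
      (g := fun x => (((fun x : ℝ => 2*x)⁻¹' B).indicator (1 : ℝ → ℝ≥0∞) x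
        + ((fun x : ℝ => 1-2*x)⁻¹' B).indicator (1 : ℝ → ℝ≥0∞) x) * 2⁻¹)
      measurableSet_Icc (fun x hx => by rw [if_pos hx.2, div_eq_mul_inv])]
    rw [lintegral_mul_const _ (show Measurable fun x => ((fun x : ℝ => 2*x)⁻¹' B).indicator (1 : ℝ → ℝ≥0∞) x + ((fun x : ℝ => 1-2*x)⁻¹' B).indicator (1 : ℝ → ℝ≥0∞) x from m1.add m2), lintegral_add_left m1]
    rw [← div_eq_mul_inv]
    rw [lint_ind _ _ hB1, lint_ind _ _ hB2, v1, v2]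
    rw [show (2⁻¹*c : ℝ≥0∞) = c/2 by rw [div_eq_mul_inv, mul_comm], ENNReal.add_halves]
  have hR : (∫⁻ x in Set.Ioc (1/2:ℝ) 1,
      if x ≤ 1/2 then
        (((fun x => 2*x)⁻¹' B).indicator 1 x + ((fun x => 1-2*x)⁻¹' B).indicator 1 x) / 2
      else ((fun x => 2*x-1)⁻¹' B).indicator 1 x) = 2⁻¹ * c := by
    rw [setLIntegral_congr_fun
      (g := fun x => ((fun x : ℝ => 2*x-1)⁻¹' B).indicator (1 : ℝ → ℝ≥0∞) x)
      measurableSet_Ioc (fun x hx => if_neg (not_le.mpr hx.1))]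
    rw [lint_ind _ _ hB3, v3]
  rw [hL, hR]
  rw [show (2⁻¹ : ℝ≥0∞) * c = c / 2 by rw [div_eq_mul_inv, mul_comm]]
  exact ENNReal.add_halves c
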